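/- Let P be a finite set of points in the plane, θ ∈ ℝ, and let x, y ∈ ℝ² be such that the first (type 0) open θ-quadrant Q₀ with apex x and the third (type 2) open θ-quadrant Q₂ with apex y are both P-free and overlap, i.e. ⟨y − x, w_θ⟩ > 0 and ⟨y − x, w_{θ+π/2}⟩ > 0. Suppose moreover that P contains a point p with ⟨p, w_θ⟩ ≤ ⟨x, w_θ⟩ and ⟨p, w_{θ+π/2}⟩ ≥ ⟨y, w_{θ+π/2}⟩, and a point q with ⟨q, w_θ⟩ ≥ ⟨y, w_θ⟩ and ⟨q, w_{θ+π/2}⟩ ≤ ⟨x, w_{θ+π/2}⟩. Then RCH_θ(P) is not preconnected (the rectilinear convex hull is disconnected). -/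

import Mathlib

open scoped RealInnerProductSpace

noncomputable section

/-- The Euclidean plane. -/
abbrev Plane := EuclideanSpace ℝ (Fin 2)

/-- The unit vector `w_θ = (cos θ, sin θ)`. -/
def wdir (θ : ℝ) : Plane := WithLp.toLp 2 ![Real.cos θ, Real.sin θ]

/-- The open θ-quadrant of type `i` with apex `x`. -/
def openQuad (θ : ℝ) (i : Fin 4) (x : Plane) : Set Plane :=
  {z | 0 < ⟪z - x, wdir (θ + (i : ℕ) * (Real.pi / 2))⟫ ∧
       0 < ⟪z - x, wdir (θ + ((i : ℕ) + 1) * (Real.pi / 2))⟫}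

/-- The rectilinear convex hull of `P` with orientation `θ`. -/
def RCH (θ : ℝ) (P : Set Plane) : Set Plane :=
  Set.univ \ ⋃ (x : Plane) (i : Fin 4) (_ : openQuad θ i x ∩ P = ∅), openQuad θ i x

lemma wdir_add_pi (α : ℝ) : wdir (α + Real.pi) = -wdir α := by
  unfold wdir
  ext i
  fin_cases i <;>
    simp [Real.cos_add, Real.sin_add]

lemma mem_RCH_of_mem (θ : ℝ) (P : Set Plane) {z : Plane} (hz : z ∈ P) : z ∈ RCH θ P := by
  simp only [RCH, Set.mem_diff, Set.mem_univ, true_and, Set.mem_iUnion, not_exists]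
  rintro a i hfree hmem
  have : z ∈ openQuad θ i a ∩ P := ⟨hmem, hz⟩
  rw [hfree] at this
  exact this

lemma not_mem_of_free_of_mem_RCH (θ : ℝ) (P : Set Plane) {z a : Plane} {i : Fin 4}
    (hz : z ∈ RCH θ P) (hfree : openQuad θ i a ∩ P = ∅) : z ∉ openQuad θ i a := by
  simp only [RCH, Set.mem_diff, Set.mem_univ, true_and, Set.mem_iUnion, not_exists] at hz
  exact hz a i hfree

lemma mem_openQuad_zero (θ : ℝ) (x z : Plane) :
    z ∈ openQuad θ 0 x ↔ ⟪x, wdir θ⟫ < ⟪z, wdir θ⟫ ∧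
      ⟪x, wdir (θ + Real.pi / 2)⟫ < ⟪z, wdir (θ + Real.pi / 2)⟫ := by
  have h0 : θ + (((0 : Fin 4) : ℕ) : ℝ) * (Real.pi / 2) = θ := by norm_num
  have h1 : θ + ((((0 : Fin 4) : ℕ) : ℝ) + 1) * (Real.pi / 2) = θ + Real.pi / 2 := by norm_num
  simp only [openQuad, Set.mem_setOf_eq, h0, h1, inner_sub_left, sub_pos]

lemma mem_openQuad_two (θ : ℝ) (y z : Plane) :
    z ∈ openQuad θ 2 y ↔ ⟪z, wdir θ⟫ < ⟪y, wdir θ⟫ ∧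
      ⟪z, wdir (θ + Real.pi / 2)⟫ < ⟪y, wdir (θ + Real.pi / 2)⟫ := by
  have h2 : ((2 : Fin 4) : ℕ) = 2 := rfl
  have h0 : θ + (((2 : Fin 4) : ℕ) : ℝ) * (Real.pi / 2) = θ + Real.pi := by
    rw [h2]; push_cast; ring
  have h1 : θ + ((((2 : Fin 4) : ℕ) : ℝ) + 1) * (Real.pi / 2) = (θ + Real.pi / 2) + Real.pi := by
    rw [h2]; push_cast; ring
  simp only [openQuad, Set.mem_setOf_eq, h0, h1, wdir_add_pi, inner_neg_right,
    inner_sub_left, neg_pos, sub_neg]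

theorem rch_disconnected_of_overlap (P : Set Plane) (hP : P.Finite) (θ : ℝ)
    (x y : Plane)
    (hfree₀ : openQuad θ 0 x ∩ P = ∅) (hfree₂ : openQuad θ 2 y ∩ P = ∅)
    (hover₁ : 0 < ⟪y - x, wdir θ⟫) (hover₂ : 0 < ⟪y - x, wdir (θ + Real.pi / 2)⟫)
    (p : Plane) (hp : p ∈ P)
    (hp₁ : ⟪p, wdir θ⟫ ≤ ⟪x, wdir θ⟫)
    (hp₂ : ⟪y, wdir (θ + Real.pi / 2)⟫ ≤ ⟪p, wdir (θ + Real.pi / 2)⟫)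
    (q : Plane) (hq : q ∈ P)
    (hq₁ : ⟪y, wdir θ⟫ ≤ ⟪q, wdir θ⟫)
    (hq₂ : ⟪q, wdir (θ + Real.pi / 2)⟫ ≤ ⟪x, wdir (θ + Real.pi / 2)⟫) :
    ¬ IsPreconnected (RCH θ P) := by
  intro h
  rw [inner_sub_left, sub_pos] at hover₁ hover₂
  set u := wdir θ with hu
  set v := wdir (θ + Real.pi / 2) with hv
  set U : Set Plane := {z | ⟪z, u⟫ < ⟪y, u⟫} with hU
  set V : Set Plane := {z | ⟪x, u⟫ < ⟪z, u⟫} with hV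
  have hUopen : IsOpen U :=
    isOpen_lt (Continuous.inner continuous_id continuous_const) continuous_const
  have hVopen : IsOpen V :=
    isOpen_lt continuous_const (Continuous.inner continuous_id continuous_const)
  have hcover : RCH θ P ⊆ U ∪ V := by
    intro z _
    by_cases hz : ⟪z, u⟫ < ⟪y, u⟫
    · exact Or.inl hz
    · exact Or.inr (lt_of_lt_of_le hover₁ (not_lt.mp hz))
  have hpU : p ∈ RCH θ P ∩ U := by
    refine ⟨mem_RCH_of_mem θ P hp, ?_⟩
    exact lt_of_le_of_lt hp₁ hover₁
  have hqV : q ∈ RCH θ P ∩ V := by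
    refine ⟨mem_RCH_of_mem θ P hq, ?_⟩
    exact lt_of_lt_of_le hover₁ hq₁
  obtain ⟨z, hzR, hzU, hzV⟩ := h U V hUopen hVopen hcover ⟨p, hpU⟩ ⟨q, hqV⟩
  have hz0 := not_mem_of_free_of_mem_RCH θ P hzR hfree₀
  have hz2 := not_mem_of_free_of_mem_RCH θ P hzR hfree₂
  rw [mem_openQuad_zero] at hz0
  rw [mem_openQuad_two] at hz2
  push_neg at hz0 hz2
  have hzU' : ⟪z, u⟫ < ⟪y, u⟫ := hzU
  have hzV' : ⟪x, u⟫ < ⟪z, u⟫ := hzV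
  have h1 : ⟪z, v⟫ ≤ ⟪x, v⟫ := hz0 hzV'
  have h2 : ⟪y, v⟫ ≤ ⟪z, v⟫ := hz2 hzU'
  linarith
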